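/- For a skew-symmetric matrix M of even size 2k over a commutative ring, the determinant of M equals the square of its Pfaffian. -/

import Mathlib

open Matrix

theorem skew_det_sq {K : Type*} [Field K] [CharZero K] :
    ∀ (n : ℕ) (M : Matrix (Fin n) (Fin n) K), Mᵀ = -M → ∃ a : K, M.det = a ^ 2 := by
  intro n
  induction n using Nat.strong_induction_on with
  | _ n ih =>
    match n, ih with
    | 0, _ =>
      intro M _
      exact ⟨1, by simp [Matrix.det_fin_zero]⟩
    | 1, _ =>
      intro M h
      have h0 : M 0 0 = 0 := by
        have := congrFun (congrFun h 0) 0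
        simp only [Matrix.transpose_apply, Matrix.neg_apply] at this
        have h2 : (2 : K) * M 0 0 = 0 := by ring_nf; linear_combination this
        exact by
          rcases mul_eq_zero.mp h2 with h | h
          · exact absurd h two_ne_zero
          · exact h
      exact ⟨0, by rw [Matrix.det_fin_one, h0]; ring⟩
    | (n + 2), ih =>
      intro M hskew
      have hdiag : ∀ i, M i i = 0 := by
        intro i
        have := congrFun (congrFun hskew i) i
        simp only [Matrix.transpose_apply, Matrix.neg_apply] at this
        have h2 : (2 : K) * M i i = 0 := by linear_combination this
        rcases mul_eq_zero.mp h2 with h | h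
        · exact absurd h two_ne_zero
        · exact h
      by_cases hM : M = 0
      · exact ⟨0, by simp [hM]⟩
      · -- find nonzero entry
        obtain ⟨i, j, hij⟩ : ∃ i j, M i j ≠ 0 := by
          by_contra hc
          push_neg at hc
          exact hM (by ext i j; simp [hc])
        have hine : i ≠ j := by
          rintro rfl
          exact hij (hdiag i)
        -- build permutation sending 0 ↦ i, 1 ↦ j
        set τ : Equiv.Perm (Fin (n + 2)) := Equiv.swap 0 i with hτ
        set j' : Fin (n + 2) := τ j with hj'
        have hj'ne : j' ≠ 0 := by
          intro h
          apply hine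
          have : τ j' = τ 0 := by rw [h]
          rw [hj', Equiv.swap_apply_self, Equiv.swap_apply_left] at this
          exact this.symm
        set ρ : Equiv.Perm (Fin (n + 2)) := Equiv.swap 1 j' with hρ
        set σ : Equiv.Perm (Fin (n + 2)) := ρ.trans τ with hσ
        have hσ0 : σ 0 = i := by
          have hρ0 : ρ 0 = 0 :=
            Equiv.swap_apply_of_ne_of_ne (by simp) (Ne.symm hj'ne)
          simp [hσ, Equiv.trans_apply, hρ0, hτ, Equiv.swap_apply_left]
        have hσ1 : σ 1 = j := by
          have hρ1 : ρ 1 = j' := Equiv.swap_apply_left _ _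
          have : τ j' = j := by rw [hj', Equiv.swap_apply_self]
          simp [hσ, Equiv.trans_apply, hρ1, this]
        -- reindex
        set e : Fin 2 ⊕ Fin n ≃ Fin (n + 2) :=
          (finSumFinEquiv.trans (finCongr (by omega))).trans σ with he
        set P : Matrix (Fin 2 ⊕ Fin n) (Fin 2 ⊕ Fin n) K := M.submatrix e e with hP
        have hPdet : P.det = M.det := Matrix.det_submatrix_equiv_self e M
        have hPs : ∀ x y, P y x = -P x y := by
          intro x y
          have := congrFun (congrFun hskew (e x)) (e y)
          simpa [hP, Matrix.submatrix_apply] using this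
        have he0 : e (Sum.inl 0) = i := by
          have : (finSumFinEquiv.trans (finCongr (by omega : 2 + n = n + 2)))
              (Sum.inl (0 : Fin 2)) = (0 : Fin (n + 2)) := by
            simp [Fin.ext_iff]
          simp [he, Equiv.trans_apply, this, hσ0]
        have he1 : e (Sum.inl 1) = j := by
          have : (finSumFinEquiv.trans (finCongr (by omega : 2 + n = n + 2)))
              (Sum.inl (1 : Fin 2)) = (1 : Fin (n + 2)) := by
            simp [Fin.ext_iff]
          simp [he, Equiv.trans_apply, this, hσ1]
        set c : K := M i j with hc
        set A := P.toBlocks₁₁ with hA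
        set B := P.toBlocks₁₂ with hB
        set C := P.toBlocks₂₁ with hC
        set D := P.toBlocks₂₂ with hD
        have hAeq : A = !![0, c; -c, 0] := by
          ext x y
          fin_cases x <;> fin_cases y <;>
            simp [hA, Matrix.toBlocks₁₁, hP, Matrix.submatrix_apply, he0, he1] <;>
            first
            | exact hdiag _
            | rfl
            | · have := hPs (Sum.inl 0) (Sum.inl 1)
                simp [hP, Matrix.submatrix_apply, he0, he1] at this
                simpa using this
        have hBt : Bᵀ = -C := by
          ext x y
          simpa [hB, hC, Matrix.toBlocks₁₂, Matrix.toBlocks₂₁] using hPs (Sum.inr x) (Sum.inl y)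
        have hCt : Cᵀ = -B := by
          ext q i
          simpa [hB, hC, Matrix.toBlocks₁₂, Matrix.toBlocks₂₁] using hPs (Sum.inl q) (Sum.inr i)
        have hDt : Dᵀ = -D := by
          ext x y
          simpa [hD, Matrix.toBlocks₂₂] using hPs (Sum.inr x) (Sum.inr y)
        have hcne : c ≠ 0 := hij
        set E : Matrix (Fin 2) (Fin 2) K := !![0, -c⁻¹; c⁻¹, 0] with hE
        have hEA : E * A = 1 := by
          rw [hAeq, hE, Matrix.mul_fin_two, Matrix.one_fin_two]
          congr 1 <;> field_simp <;> simp
        have hAE : A * E = 1 := by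
          rw [hAeq, hE, Matrix.mul_fin_two, Matrix.one_fin_two]
          congr 1 <;> field_simp <;> simp
        letI : Invertible A := ⟨E, hEA, hAE⟩
        have hdetP : P.det = A.det * (D - C * ⅟A * B).det := by
          conv_lhs => rw [← Matrix.fromBlocks_toBlocks P]
          exact Matrix.det_fromBlocks₁₁ _ _ _ _
        have hinv : ⅟A = E := rfl
        rw [hinv] at hdetP
        have hEt : Eᵀ = -E := by
          ext x y
          fin_cases x <;> fin_cases y <;> simp [hE]
        have hSskew : (D - C * E * B)ᵀ = -(D - C * E * B) := by
          rw [Matrix.transpose_sub, hDt, Matrix.transpose_mul, Matrix.transpose_mul,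
            hBt, hEt, hCt]
          simp [Matrix.neg_mul, Matrix.mul_neg, Matrix.mul_assoc, sub_eq_add_neg, neg_add]
          abel
        obtain ⟨a, ha⟩ := ih n (by omega) (D - C * E * B) hSskew
        have hdetA : A.det = c ^ 2 := by
          rw [hAeq, Matrix.det_fin_two_of]; ring
        exact ⟨c * a, by rw [← hPdet, hdetP, hdetA, ha]; ring⟩

/-- For a skew-symmetric matrix `M` of even size `2k` over a commutative ring
(with zero diagonal, as required when `2` is not invertible), the determinant
of `M` is the square of its Pfaffian; in particular `det M` is a square. -/
theorem det_eq_pfaffian_sq {R : Type*} [CommRing R] (k : ℕ)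
    (M : Matrix (Fin (2 * k)) (Fin (2 * k)) R)
    (hskew : Mᵀ = -M) (hdiag : ∀ i, M i i = 0) :
    ∃ pf : R, M.det = pf ^ 2 := by
  classical
  set A := MvPolynomial (Fin (2 * k) × Fin (2 * k)) ℤ with hAdef
  set X : Matrix (Fin (2 * k)) (Fin (2 * k)) A := fun i j =>
    if i < j then MvPolynomial.X (i, j)
    else if j < i then -MvPolynomial.X (j, i) else 0 with hX
  have hXskew : Xᵀ = -X := by
    refine Matrix.ext fun i j => ?_
    simp only [Matrix.transpose_apply, Matrix.neg_apply]
    simp only [hX]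
    rcases lt_trichotomy i j with h | h | h
    · simp [h, lt_asymm h]
    · simp [h]
    · simp [h, lt_asymm h]
      exact (neg_neg (G := A) _).symm
  set K := FractionRing A with hK
  haveI : CharZero K :=
    (algebraMap A K).charZero_iff (IsFractionRing.injective A K) |>.mp inferInstance
  set Y : Matrix (Fin (2 * k)) (Fin (2 * k)) K := X.map (algebraMap A K) with hY
  have hYskew : Yᵀ = -Y := by
    ext i j
    have := congrFun (congrFun hXskew i) j
    simp only [Matrix.transpose_apply, Matrix.neg_apply] at this ⊢
    simp [hY, Matrix.map_apply, this]
  obtain ⟨a, ha⟩ := skew_det_sq (2 * k) Y hYskew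
  have hdet : algebraMap A K X.det = a ^ 2 := by
    rw [(algebraMap A K).map_det, RingHom.mapMatrix_apply, ← hY, ha]
  have hint : IsIntegral A a := by
    refine ⟨Polynomial.X ^ 2 - Polynomial.C X.det,
      Polynomial.monic_X_pow_sub_C _ (by norm_num), ?_⟩
    simp [Polynomial.eval₂_sub, hdet]
  obtain ⟨b, hb⟩ := IsIntegrallyClosed.isIntegral_iff.mp hint
  have hXdet : X.det = b ^ 2 := by
    apply IsFractionRing.injective A K
    rw [hdet, map_pow, hb]
  set φ : A →+* R := MvPolynomial.eval₂Hom (Int.castRingHom R) (fun p => M p.1 p.2) with hφ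
  have hmap : X.map ⇑φ = M := by
    ext i j : 2
    simp only [Matrix.map_apply]
    simp only [hX]
    rcases lt_trichotomy i j with h | h | h
    · rw [if_pos h]
      exact MvPolynomial.eval₂Hom_X' _ _ (i, j)
    · subst h
      simp [hdiag]
    · have hji : M i j = -M j i := by
        have := congrFun (congrFun hskew j) i
        simpa using this
      rw [if_neg (lt_asymm h), if_pos h, map_neg, MvPolynomial.eval₂Hom_X' _ _ (j, i)]
      simpa using hji.symm
  refine ⟨φ b, ?_⟩
  rw [← hmap, ← RingHom.mapMatrix_apply, ← φ.map_det, hXdet, map_pow]
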